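/- The generating function for hexagonal lattice animals embeddable in a square-lattice strip of height 3 is F(z) = z(1+z)/(1-z); equivalently, there is 1 such hexanimal with 1 cell and exactly 2 with n cells for every n \u2265 2. -/

import Mathlib

/-- Adjacency of hexagonal cells, in axial coordinates: each cell has six neighbours. -/
def HexAdj (a b : ℤ × ℤ) : Prop :=
  b - a ∈ ({(1,0), (-1,0), (0,1), (0,-1), (1,-1), (-1,1)} : Set (ℤ × ℤ))

/-- A hexagonal lattice animal with `n` cells: a nonempty, edge-connected set of `n`
hexagonal cells. -/
def IsHexAnimal (n : ℕ) (S : Finset (ℤ × ℤ)) : Prop :=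
  S.card = n ∧ S.Nonempty ∧
    ∀ a ∈ S, ∀ b ∈ S,
      Relation.ReflTransGen (fun p q => p ∈ S ∧ q ∈ S ∧ HexAdj p q) a b

/-- Translation of a set of cells by a lattice vector. -/
def translateSet (v : ℤ × ℤ) (S : Finset (ℤ × ℤ)) : Finset (ℤ × ℤ) :=
  S.image fun p => p + v

/-- Two sets of cells are equivalent when one is a translate of the other. -/
def TransEquiv (S T : Finset (ℤ × ℤ)) : Prop := ∃ v, translateSet v S = T

/-- The number of hexagonal lattice animals with `n` cells, up to translation. -/
noncomputable def hexCount (n : ℕ) : ℕ :=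
  Nat.card (Quot (fun S T : {S : Finset (ℤ × ℤ) // IsHexAnimal n S} => TransEquiv S.1 T.1))

/-- The doubling map: each hexagonal cell `(x, y)` is replaced by the vertical domino of
the two square cells `(x, x + 2y)` and `(x, x + 2y + 1)`, so adjacent hexagonal columns
are vertically offset by one square unit. -/
def hexToSq (S : Finset (ℤ × ℤ)) : Finset (ℤ × ℤ) :=
  S.biUnion fun p => {(p.1, p.1 + 2 * p.2), (p.1, p.1 + 2 * p.2 + 1)}

/-- A hexagonal animal fits (after translation) in the square-lattice strip `0 ≤ y < k`,
via the domino embedding. -/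
def FitsStrip (k : ℕ) (S : Finset (ℤ × ℤ)) : Prop :=
  ∃ v : ℤ × ℤ, ∀ p ∈ hexToSq (translateSet v S), 0 ≤ p.2 ∧ p.2 < (k : ℤ)

/-- The number of hexagonal lattice animals with `n` cells, up to translation, that are
embeddable in a square-lattice strip of height `k`. -/
noncomputable def stripCount (k n : ℕ) : ℕ :=
  Nat.card (Quot (fun S T : {S : Finset (ℤ × ℤ) // IsHexAnimal n S ∧ FitsStrip k S} =>
    TransEquiv S.1 T.1))

-- auxiliary development
lemma hexAdj_iff (p q : ℤ × ℤ) : HexAdj p q ↔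
    (q.1 - p.1 = 1 ∧ q.2 - p.2 = 0) ∨ (q.1 - p.1 = -1 ∧ q.2 - p.2 = 0) ∨
    (q.1 - p.1 = 0 ∧ q.2 - p.2 = 1) ∨ (q.1 - p.1 = 0 ∧ q.2 - p.2 = -1) ∨
    (q.1 - p.1 = 1 ∧ q.2 - p.2 = -1) ∨ (q.1 - p.1 = -1 ∧ q.2 - p.2 = 1) := by
  simp [HexAdj, Prod.ext_iff]

def ybit (t x : ℤ) : ℤ := (t - x + (x - t) % 2) / 2

lemma two_ybit (t x : ℤ) : 2 * ybit t x = t - x + (x - t) % 2 :=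
  Int.mul_ediv_cancel' (by omega)

def stripSeg (t m : ℤ) (n : ℕ) : Finset (ℤ × ℤ) :=
  (Finset.range n).image fun i : ℕ => (m + (i : ℤ), ybit t (m + (i : ℤ)))

lemma mem_stripSeg {t m : ℤ} {n : ℕ} {p : ℤ × ℤ} :
    p ∈ stripSeg t m n ↔ m ≤ p.1 ∧ p.1 < m + n ∧ p.2 = ybit t p.1 := by
  simp only [stripSeg, Finset.mem_image, Finset.mem_range]
  constructor
  · rintro ⟨i, hi, rfl⟩
    refine ⟨by omega, by push_cast; omega, rfl⟩
  · rintro ⟨h1, h2, h3⟩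
    refine ⟨(p.1 - m).toNat, by omega, ?_⟩
    have hx : (m + ((p.1 - m).toNat : ℤ)) = p.1 := by omega
    rw [hx]
    exact Prod.ext_iff.mpr ⟨rfl, h3.symm⟩

lemma hexAdj_symm {p q : ℤ × ℤ} (h : HexAdj p q) : HexAdj q p := by
  rw [hexAdj_iff] at h ⊢; omega

lemma g_stripSeg {t m : ℤ} {n : ℕ} {p : ℤ × ℤ} (hp : p ∈ stripSeg t m n) :
    p.1 + 2 * p.2 = t ∨ p.1 + 2 * p.2 = t + 1 := by
  obtain ⟨-, -, h⟩ := mem_stripSeg.mp hp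
  have := two_ybit t p.1
  omega

lemma stripSeg_isHexAnimal {t m : ℤ} {n : ℕ} (hn : 1 ≤ n) :
    IsHexAnimal n (stripSeg t m n) := by
  set C := stripSeg t m n with hC
  set c : ℕ → ℤ × ℤ := fun i => (m + (i : ℤ), ybit t (m + (i : ℤ))) with hc
  have hmem : ∀ i, i < n → c i ∈ C := by
    intro i hi
    exact Finset.mem_image.mpr ⟨i, Finset.mem_range.mpr hi, rfl⟩
  have hedge : ∀ i, i + 1 < n → (fun p q => p ∈ C ∧ q ∈ C ∧ HexAdj p q) (c i) (c (i+1)) := by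
    intro i hi
    refine ⟨hmem i (by omega), hmem (i+1) hi, ?_⟩
    rw [hexAdj_iff]
    have h1 := two_ybit t (m + (i : ℤ))
    have h2 := two_ybit t (m + ((i : ℤ) + 1))
    simp only [hc]
    push_cast
    omega
  have hchain : ∀ j, j < n → ∀ i, i ≤ j →
      Relation.ReflTransGen (fun p q => p ∈ C ∧ q ∈ C ∧ HexAdj p q) (c i) (c j) := by
    intro j
    induction j with
    | zero => intro _ i hi; interval_cases i; exact Relation.ReflTransGen.refl
    | succ j ih =>
      intro hj i hi
      rcases Nat.lt_or_ge i (j+1) with h | h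
      · exact Relation.ReflTransGen.tail (ih (by omega) i (by omega)) (hedge j hj)
      · have : i = j + 1 := by omega
        subst this; exact Relation.ReflTransGen.refl
  have hcard : C.card = n := by
    rw [hC, stripSeg, Finset.card_image_of_injOn, Finset.card_range]
    intro i _ j _ h
    have h1 : m + (i : ℤ) = m + (j : ℤ) := congrArg Prod.fst h
    omega
  refine ⟨hcard, ⟨c 0, hmem 0 (by omega)⟩, ?_⟩
  intro a ha b hb
  obtain ⟨i, hi, rfl⟩ := Finset.mem_image.mp ha
  obtain ⟨j, hj, rfl⟩ := Finset.mem_image.mp hb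
  rw [Finset.mem_range] at hi hj
  rcases Nat.le_total i j with h | h
  · exact hchain j hj i h
  · have hsym : Symmetric (fun p q => p ∈ C ∧ q ∈ C ∧ HexAdj p q) :=
      fun p q hpq => ⟨hpq.2.1, hpq.1, hexAdj_symm hpq.2.2⟩
    haveI : Std.Symm (fun p q : ℤ × ℤ => p ∈ C ∧ q ∈ C ∧ HexAdj p q) := ⟨hsym⟩
    exact (Relation.ReflTransGen.symmetric (r := fun p q : ℤ × ℤ => p ∈ C ∧ q ∈ C ∧ HexAdj p q)).symm _ _ (hchain i hi j h)

lemma mem_translateSet {v q : ℤ × ℤ} {S : Finset (ℤ × ℤ)} :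
    q ∈ translateSet v S ↔ q - v ∈ S := by
  simp only [translateSet, Finset.mem_image]
  constructor
  · rintro ⟨p, hp, rfl⟩; simpa using hp
  · intro h; exact ⟨q - v, h, by ring⟩

lemma stripSeg_fitsStrip {t m : ℤ} {n : ℕ} : FitsStrip 3 (stripSeg t m n) := by
  refine ⟨(-t, 0), ?_⟩
  intro q hq
  simp only [hexToSq, Finset.mem_biUnion, Finset.mem_insert, Finset.mem_singleton] at hq
  obtain ⟨p, hp, hq⟩ := hq
  rw [mem_translateSet] at hp
  have hg := g_stripSeg hp
  simp only [Prod.fst_sub, Prod.snd_sub] at hg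
  rcases hq with rfl | rfl <;> simp <;> omega

lemma transEquiv_refl (S : Finset (ℤ × ℤ)) : TransEquiv S S := by
  refine ⟨0, ?_⟩
  simp [translateSet]

lemma translateSet_translateSet (v w : ℤ × ℤ) (S : Finset (ℤ × ℤ)) :
    translateSet w (translateSet v S) = translateSet (v + w) S := by
  ext q
  simp only [mem_translateSet]
  have : q - w - v = q - (v + w) := by ring
  rw [this]

lemma transEquiv_symm {S T : Finset (ℤ × ℤ)} (h : TransEquiv S T) : TransEquiv T S := by
  obtain ⟨v, rfl⟩ := h
  exact ⟨-v, by rw [translateSet_translateSet]; simp [translateSet]⟩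

lemma transEquiv_trans {S T U : Finset (ℤ × ℤ)} (h1 : TransEquiv S T) (h2 : TransEquiv T U) :
    TransEquiv S U := by
  obtain ⟨v, rfl⟩ := h1
  obtain ⟨w, rfl⟩ := h2
  exact ⟨v + w, (translateSet_translateSet v w S).symm⟩

lemma stripSeg_transEquiv (t m t' m' : ℤ) (n : ℕ) (h : (t - m) % 2 = (t' - m') % 2) :
    TransEquiv (stripSeg t m n) (stripSeg t' m' n) := by
  refine ⟨(m' - m, (t' - t - (m' - m)) / 2), ?_⟩
  have h2 : 2 * ((t' - t - (m' - m)) / 2) = t' - t - (m' - m) :=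
    Int.mul_ediv_cancel' (by omega)
  ext q
  rw [mem_translateSet, mem_stripSeg, mem_stripSeg]
  simp only [Prod.fst_sub, Prod.snd_sub]
  have y1 := two_ybit t (q.1 - (m' - m))
  have y2 := two_ybit t' q.1
  constructor <;> rintro ⟨a, b, c⟩ <;> refine ⟨by omega, by omega, by omega⟩

lemma classify {n : ℕ} {S : Finset (ℤ × ℤ)}
    (hA : IsHexAnimal n S) (hF : FitsStrip 3 S) (hn : 1 ≤ n) :
    ∃ t m : ℤ, S = stripSeg t m n := by
  obtain ⟨hcard, hne, hconn⟩ := hA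
  obtain ⟨v, hv⟩ := hF
  -- the strip level
  set t : ℤ := -(v.1 + 2 * v.2) with ht
  have hst : ∀ p ∈ S, p.1 + 2 * p.2 = t ∨ p.1 + 2 * p.2 = t + 1 := by
    intro p hp
    have hmem : (p.1 + v.1, (p.1 + v.1) + 2 * (p.2 + v.2)) ∈ hexToSq (translateSet v S) := by
      simp only [hexToSq, Finset.mem_biUnion]
      refine ⟨p + v, ?_, by simp⟩
      rw [mem_translateSet]; simpa using hp
    have hmem2 : (p.1 + v.1, (p.1 + v.1) + 2 * (p.2 + v.2) + 1) ∈ hexToSq (translateSet v S) := by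
      simp only [hexToSq, Finset.mem_biUnion]
      refine ⟨p + v, ?_, by simp⟩
      rw [mem_translateSet]; simpa using hp
    have h1 := hv _ hmem
    have h2 := hv _ hmem2
    simp only at h1 h2
    omega
  -- each cell is determined by its first coordinate
  have hy : ∀ p ∈ S, p.2 = ybit t p.1 := by
    intro p hp
    have := hst p hp
    have := two_ybit t p.1
    omega
  have huniq : ∀ p ∈ S, ∀ q ∈ S, p.1 = q.1 → p = q := by
    intro p hp q hq h
    have h1 := hst p hp
    have h2 := hst q hq
    refine Prod.ext_iff.mpr ⟨h, by omega⟩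
  -- betweenness
  have hbetween : ∀ a ∈ S, ∀ b ∈ S, ∀ x : ℤ,
      ((a.1 ≤ x ∧ x ≤ b.1) ∨ (b.1 ≤ x ∧ x ≤ a.1)) → ∃ p ∈ S, p.1 = x := by
    intro a ha b hb
    have hpath := hconn a ha b hb
    clear hb
    induction hpath with
    | refl => intro x hx; exact ⟨a, ha, by omega⟩
    | @tail c b hac hcb ih =>
      intro x hx
      by_cases hxb : x = b.1
      · exact ⟨b, hcb.2.1, hxb.symm⟩
      · have hc : c ∈ S := hcb.1
        have hb' : b ∈ S := hcb.2.1
        have hadj := hcb.2.2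
        rw [hexAdj_iff] at hadj
        have g1 := hst c hc
        have g2 := hst b hb'
        exact ih x (by omega)
  -- the set of first coordinates is an interval
  have hXne : (S.image Prod.fst).Nonempty := hne.image _
  set m : ℤ := (S.image Prod.fst).min' hXne with hm
  set M : ℤ := (S.image Prod.fst).max' hXne with hM
  obtain ⟨pm, hpm, hpm1⟩ := Finset.mem_image.mp ((S.image Prod.fst).min'_mem hXne)
  obtain ⟨pM, hpM, hpM1⟩ := Finset.mem_image.mp ((S.image Prod.fst).max'_mem hXne)
  have hbnd : ∀ p ∈ S, m ≤ p.1 ∧ p.1 ≤ M := by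
    intro p hp
    exact ⟨Finset.min'_le _ _ (Finset.mem_image_of_mem _ hp),
      Finset.le_max' _ _ (Finset.mem_image_of_mem _ hp)⟩
  have hcover : ∀ x : ℤ, m ≤ x → x ≤ M → ∃ p ∈ S, p.1 = x := by
    intro x h1 h2
    exact hbetween pm hpm pM hpM x (by omega)
  have hXeq : S.image Prod.fst = Finset.Icc m M := by
    ext x
    rw [Finset.mem_Icc]
    constructor
    · intro hx
      obtain ⟨p, hp, rfl⟩ := Finset.mem_image.mp hx
      exact hbnd p hp
    · rintro ⟨h1, h2⟩
      obtain ⟨p, hp, rfl⟩ := hcover x h1 h2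
      exact Finset.mem_image_of_mem _ hp
  have hXcard : (S.image Prod.fst).card = n := by
    rw [Finset.card_image_of_injOn, hcard]
    intro p hp q hq h
    exact huniq p hp q hq h
  have hmM : M = m + n - 1 := by
    rw [hXeq] at hXcard
    rw [Int.card_Icc] at hXcard
    have hle : m ≤ M := (hbnd pm hpm).1.trans (hbnd pm hpm).2
    omega
  refine ⟨t, m, ?_⟩
  ext p
  rw [mem_stripSeg]
  constructor
  · intro hp
    have := hbnd p hp
    exact ⟨this.1, by omega, hy p hp⟩
  · rintro ⟨h1, h2, h3⟩
    obtain ⟨q, hq, hq1⟩ := hcover p.1 h1 (by omega)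
    have : q = p := Prod.ext_iff.mpr ⟨hq1, by rw [hy q hq, hq1, h3]⟩
    rwa [← this]

lemma chains_ne {n : ℕ} (hn : 2 ≤ n) : ¬ TransEquiv (stripSeg (-1) 0 n) (stripSeg 0 0 n) := by
  rintro ⟨v, hEq⟩
  have y00 : ybit 0 0 = 0 := by decide
  have y01 : ybit 0 1 = 0 := by decide
  have ym0 : ybit (-1) 0 = 0 := by decide
  have ym1 : ybit (-1) 1 = -1 := by decide
  have h1 : v ∈ stripSeg 0 0 n := by
    rw [← hEq, mem_translateSet, sub_self]
    refine mem_stripSeg.mpr ⟨by simp, by simp; omega, by simp [ym0]⟩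
  have h2 : ((0,0) : ℤ × ℤ) - v ∈ stripSeg (-1) 0 n := by
    rw [← mem_translateSet, hEq]
    exact mem_stripSeg.mpr ⟨le_refl _, by simp; omega, y00.symm⟩
  rw [mem_stripSeg] at h1 h2
  simp only [Prod.fst_sub, Prod.snd_sub] at h2
  have hv1 : v.1 = 0 := by omega
  have hv2 : v.2 = 0 := by rw [h1.2.2, hv1, y00]
  have hm : ((1,-1) : ℤ × ℤ) ∈ stripSeg (-1) 0 n :=
    mem_stripSeg.mpr ⟨by simp, by simp; omega, by simp [ym1]⟩
  have h3 : ((1,-1) : ℤ × ℤ) + v ∈ stripSeg 0 0 n := by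
    rw [← hEq, mem_translateSet, add_sub_cancel_right]
    exact hm
  rw [mem_stripSeg] at h3
  simp only [Prod.fst_add, Prod.snd_add, hv1, hv2] at h3
  simp [y01] at h3

/-- The generating function for hexagonal lattice animals embeddable in a square-lattice
strip of height 3 is `F(z) = z(1+z)/(1-z)`: there is 1 such hexanimal with 1 cell and
exactly 2 with `n` cells for every `n ≥ 2`. -/
theorem stripCount_three : stripCount 3 1 = 1 ∧ ∀ n : ℕ, 2 ≤ n → stripCount 3 n = 2 := by
  constructor
  · simp only [stripCount]
    rw [Nat.card_eq_one_iff_unique]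
    refine ⟨⟨?_⟩, ⟨Quot.mk _ ⟨stripSeg 0 0 1, stripSeg_isHexAnimal le_rfl, stripSeg_fitsStrip⟩⟩⟩
    intro a b
    induction a using Quot.ind with | _ a => ?_
    induction b using Quot.ind with | _ b => ?_
    apply Quot.sound
    obtain ⟨pa, ha⟩ := Finset.card_eq_one.mp a.2.1.1
    obtain ⟨pb, hb⟩ := Finset.card_eq_one.mp b.2.1.1
    refine ⟨pb - pa, ?_⟩
    rw [ha, hb]
    ext q
    simp only [mem_translateSet, Finset.mem_singleton, Prod.ext_iff, Prod.fst_sub,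
      Prod.snd_sub]
    omega
  · intro n hn
    have hn1 : 1 ≤ n := by omega
    simp only [stripCount]
    rw [Nat.card_eq_two_iff]
    refine ⟨Quot.mk _ ⟨stripSeg 0 0 n, stripSeg_isHexAnimal hn1, stripSeg_fitsStrip⟩,
            Quot.mk _ ⟨stripSeg (-1) 0 n, stripSeg_isHexAnimal hn1, stripSeg_fitsStrip⟩,
            ?_, ?_⟩
    · intro h
      have heqv : Equivalence (fun S T : {S : Finset (ℤ × ℤ) //
          IsHexAnimal n S ∧ FitsStrip 3 S} => TransEquiv S.1 T.1) :=
        ⟨fun S => transEquiv_refl S.1, fun h => transEquiv_symm h,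
          fun h1 h2 => transEquiv_trans h1 h2⟩
      rw [Quot.eq, heqv.eqvGen_iff] at h
      exact chains_ne hn (transEquiv_symm h)
    · rw [Set.eq_univ_iff_forall]
      intro x
      induction x using Quot.ind with | _ S => ?_
      obtain ⟨t, m, hS⟩ := classify S.2.1 S.2.2 hn1
      rcases Int.emod_two_eq (t - m) with h | h
      · left
        apply Quot.sound
        show TransEquiv S.1 (stripSeg 0 0 n)
        rw [hS]
        exact stripSeg_transEquiv t m 0 0 n (by omega)
      · right
        apply Quot.sound
        show TransEquiv S.1 (stripSeg (-1) 0 n)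
        rw [hS]
        exact stripSeg_transEquiv t m (-1) 0 n (by omega)
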